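/- Let A be a finite dimensional algebra over an algebraically closed field K and let W be a wide subcategory of mod(A). If W is a module in W and X ⊆ W is a submodule that belongs to T_W := filt(gen(W)), then X belongs to W. -/

import Mathlib

open CategoryTheory

section Defs

variable (K : Type) [Field K] (A : Type) [Ring A] [Algebra K A]

/-- An `A`-module is in `mod(A)` if it is finite dimensional over `K`
(via restriction of scalars along `K → A`). -/
def modCls : Set (ModuleCat A) :=
  {M | @FiniteDimensional K (RestrictScalars K A M) _ _ (RestrictScalars.module K A M)}

variable {A}

/-- A class of modules is replete (closed under isomorphisms). -/
def IsoClosed (C : Set (ModuleCat A)) : Prop :=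
  ∀ ⦃M N : ModuleCat A⦄, (M ≅ N) → M ∈ C → N ∈ C

/-- Closed under quotients. -/
def QuotClosed (C : Set (ModuleCat A)) : Prop :=
  ∀ ⦃M N : ModuleCat A⦄ (f : M ⟶ N), Function.Surjective f → M ∈ C → N ∈ C

/-- Closed under extensions. -/
def ExtClosed (C : Set (ModuleCat A)) : Prop :=
  ∀ ⦃M E N : ModuleCat A⦄ (f : M ⟶ E) (g : E ⟶ N),
    Function.Injective f → Function.Surjective g → Function.Exact f g →
    M ∈ C → N ∈ C → E ∈ C

/-- Closed under kernels. -/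
def KerClosed (C : Set (ModuleCat A)) : Prop :=
  ∀ ⦃M N : ModuleCat A⦄ (f : M ⟶ N), M ∈ C → N ∈ C →
    ModuleCat.of A ↥(LinearMap.ker f.hom) ∈ C

/-- Closed under cokernels. -/
def CokerClosed (C : Set (ModuleCat A)) : Prop :=
  ∀ ⦃M N : ModuleCat A⦄ (f : M ⟶ N), M ∈ C → N ∈ C →
    ModuleCat.of A (N ⧸ LinearMap.range f.hom) ∈ C

variable (A)

/-- A wide subcategory of `mod(A)`: a replete class of finite dimensional modules closed
under kernels, cokernels and extensions. -/
def IsWide (C : Set (ModuleCat A)) : Prop :=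
  C ⊆ modCls K A ∧ IsoClosed C ∧ KerClosed C ∧ CokerClosed C ∧ ExtClosed C

/-- A torsion class in `mod(A)`: a replete class of finite dimensional modules closed
under quotients and extensions. -/
def IsTorsionClass (C : Set (ModuleCat A)) : Prop :=
  C ⊆ modCls K A ∧ IsoClosed C ∧ QuotClosed C ∧ ExtClosed C

variable {A}

/-- `gen C`: all quotients of finite direct sums of objects of `C`. -/
def gen (C : Set (ModuleCat A)) : Set (ModuleCat A) :=
  {X | ∃ (n : ℕ) (M : Fin n → ModuleCat A) (_ : ∀ i, M i ∈ C)
      (f : ModuleCat.of A (∀ i, M i) ⟶ X), Function.Surjective f}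

/-- Modules admitting a `C`-filtration `0 = F 0 ⊆ F 1 ⊆ ⋯ ⊆ F n = X` of length exactly `n`,
with all subquotients `F (i+1) / F i` in `C`. -/
def filtLen (C : Set (ModuleCat A)) (n : ℕ) : Set (ModuleCat A) :=
  {X | ∃ F : Fin (n + 1) → Submodule A X,
      Monotone F ∧ F 0 = ⊥ ∧ F (Fin.last n) = ⊤ ∧
      ∀ i : Fin n, ModuleCat.of A
        (↥(F i.succ) ⧸ Submodule.comap (F i.succ).subtype (F i.castSucc)) ∈ C}

/-- `filt C`: all modules admitting a finite filtration with subquotients in `C`. -/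
def filt (C : Set (ModuleCat A)) : Set (ModuleCat A) :=
  {X | ∃ n, X ∈ filtLen C n}

/-- `C^{⋆n}`: modules with a `C`-filtration of length at most `n`. -/
def filtAtMost (C : Set (ModuleCat A)) (n : ℕ) : Set (ModuleCat A) :=
  {X | ∃ m ≤ n, X ∈ filtLen C m}

/-- `α(T)`: the modules `X ∈ T` such that for every map `g : Y → X` with `Y ∈ T`,
the kernel of `g` is again in `T`. -/
def alpha (T : Set (ModuleCat A)) : Set (ModuleCat A) :=
  {X | X ∈ T ∧ ∀ ⦃Y : ModuleCat A⦄ (g : Y ⟶ X), Y ∈ T →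
      ModuleCat.of A ↥(LinearMap.ker g.hom) ∈ T}

/-- `g : X ⟶ C₁` is a left `C`-approximation of `X`. -/
def IsLeftApprox (C : Set (ModuleCat A)) {X C₁ : ModuleCat A} (g : X ⟶ C₁) : Prop :=
  C₁ ∈ C ∧ ∀ ⦃C' : ModuleCat A⦄ (h : X ⟶ C'), C' ∈ C → ∃ k : C₁ ⟶ C', g ≫ k = h

/-- `g : C₂ ⟶ X` is a right `C`-approximation of `X`. -/
def IsRightApprox (C : Set (ModuleCat A)) {C₂ X : ModuleCat A} (g : C₂ ⟶ X) : Prop :=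
  C₂ ∈ C ∧ ∀ ⦃C' : ModuleCat A⦄ (h : C' ⟶ X), C' ∈ C → ∃ k : C' ⟶ C₂, k ≫ g = h

/-- A left approximation is (left) minimal if every endomorphism compatible with it is an
isomorphism. -/
def IsMinimalLeftApprox (C : Set (ModuleCat A)) {X C₁ : ModuleCat A} (g : X ⟶ C₁) : Prop :=
  IsLeftApprox C g ∧ ∀ h : C₁ ⟶ C₁, g ≫ h = g → IsIso h

variable (A)

/-- A class `C` is functorially finite in `mod(A)` if every finite dimensional module has
both a left and a right `C`-approximation. -/
def FunctFinite (C : Set (ModuleCat A)) : Prop :=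
  ∀ X ∈ modCls K A, (∃ (C₁ : ModuleCat A) (g : X ⟶ C₁), IsLeftApprox C g) ∧
    (∃ (C₂ : ModuleCat A) (g : C₂ ⟶ X), IsRightApprox C g)

variable {A}

/-- `add M`: direct summands of finite direct sums of copies of `M`. -/
def addOf (M : ModuleCat A) : Set (ModuleCat A) :=
  {X | ∃ (n : ℕ) (i : X ⟶ ModuleCat.of A (Fin n → M)) (r : ModuleCat.of A (Fin n → M) ⟶ X),
      i ≫ r = 𝟙 X}

/-- `gen M`: quotients of finite direct sums of copies of `M`. -/
def genOf (M : ModuleCat A) : Set (ModuleCat A) :=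
  {X | ∃ (n : ℕ) (f : ModuleCat.of A (Fin n → M) ⟶ X), Function.Surjective f}

/-- `P` is split projective in `C`: `P ∈ C` and every epimorphism onto `P` from an
object of `C` splits. -/
def SplitProjIn (C : Set (ModuleCat A)) (P : ModuleCat A) : Prop :=
  P ∈ C ∧ ∀ ⦃M : ModuleCat A⦄ (f : M ⟶ P), M ∈ C → Function.Surjective f →
    ∃ s : P ⟶ M, s ≫ f = 𝟙 P

end Defs


section Aux

universe v

variable {A : Type} [Ring A] {W : Set (ModuleCat.{v} A)}

lemma mem_of_equiv (hiso : IsoClosed W) {M N : Type v} [AddCommGroup M] [Module A M]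
    [AddCommGroup N] [Module A N]
    (hM : ModuleCat.of A M ∈ W) (e : M ≃ₗ[A] N) : ModuleCat.of A N ∈ W :=
  hiso e.toModuleIso hM

lemma gen_mem_of_equiv {M N : Type v} [AddCommGroup M] [Module A M]
    [AddCommGroup N] [Module A N]
    (hM : ModuleCat.of A M ∈ gen W) (e : M ≃ₗ[A] N) : ModuleCat.of A N ∈ gen W := by
  obtain ⟨n, Ms, hMs, f, hf⟩ := hM
  exact ⟨n, Ms, hMs, ModuleCat.ofHom (e.toLinearMap ∘ₗ f.hom),
    e.surjective.comp hf⟩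

variable {K : Type} [Field K] [Algebra K A]

lemma zero_mem_of_wide (hW : IsWide K A W) {W₀ : ModuleCat A} (hW₀ : W₀ ∈ W)
    {Z : Type v} [AddCommGroup Z] [Module A Z] [Subsingleton Z] :
    ModuleCat.of A Z ∈ W := by
  have hk := hW.2.2.1 (𝟙 W₀) hW₀ hW₀
  haveI : Subsingleton ↥(LinearMap.ker (𝟙 W₀ : W₀ ⟶ W₀).hom) := by
    rw [show (𝟙 W₀ : W₀ ⟶ W₀).hom = LinearMap.id from rfl, LinearMap.ker_id]
    infer_instance
  refine mem_of_equiv hW.2.1 hk ?_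
  exact LinearEquiv.ofSubsingleton _ _

lemma prod_mem_of_wide (hW : IsWide K A W) {W₀ : ModuleCat A} (hW₀ : W₀ ∈ W) :
    ∀ (n : ℕ) (Ms : Fin n → ModuleCat A), (∀ i, Ms i ∈ W) →
      ModuleCat.of A (∀ i, Ms i) ∈ W := by
  intro n
  induction n with
  | zero =>
    intro Ms _
    exact zero_mem_of_wide hW hW₀
  | succ n ih =>
    intro Ms hMs
    have h2 := ih (fun i => Ms i.succ) (fun i => hMs i.succ)
    let f : ↑(Ms 0) →ₗ[A] (∀ i, Ms i) :=
      { toFun := fun x => Fin.cons x 0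
        map_add' := by
          intro x y
          ext i
          refine Fin.cases ?_ (fun j => ?_) i <;> simp
        map_smul' := by
          intro c x
          ext i
          refine Fin.cases ?_ (fun j => ?_) i <;> simp }
    let g : (∀ i, Ms i) →ₗ[A] (∀ i : Fin n, Ms i.succ) :=
      LinearMap.pi fun i => LinearMap.proj i.succ
    have hfinj : Function.Injective f := by
      intro x y h
      simpa [f] using congrFun h 0
    have hgsurj : Function.Surjective g := by
      intro y
      refine ⟨Fin.cons 0 y, ?_⟩
      ext i
      simp [g]
    have hexact : Function.Exact f g := by
      rw [LinearMap.exact_iff]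
      ext x
      simp only [LinearMap.mem_ker, LinearMap.mem_range]
      constructor
      · intro h
        refine ⟨x 0, funext fun i => ?_⟩
        refine Fin.cases ?_ (fun j => ?_) i
        · simp [f]
        · have := congrFun h j
          simp only [g, LinearMap.pi_apply, LinearMap.proj_apply, Pi.zero_apply] at this
          simp [f, this]
      · rintro ⟨y, rfl⟩
        ext i
        simp [f, g]
    exact hW.2.2.2.2 (ModuleCat.ofHom f) (ModuleCat.ofHom g) hfinj hgsurj hexact
      (hMs 0) h2

lemma range_mem_of_wide (hW : IsWide K A W) {M N : ModuleCat A} (f : M ⟶ N)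
    (hM : M ∈ W) (hN : N ∈ W) : ModuleCat.of A ↥(LinearMap.range f.hom) ∈ W := by
  have hc := hW.2.2.2.1 f hM hN
  have hk := hW.2.2.1
    (ModuleCat.ofHom (LinearMap.range f.hom).mkQ :
      N ⟶ ModuleCat.of A (N ⧸ LinearMap.range f.hom)) hN hc
  exact mem_of_equiv hW.2.1 hk (LinearEquiv.ofEq _ _ (Submodule.ker_mkQ _))

lemma quot_mem_of_wide (hW : IsWide K A W) {N : ModuleCat A} (hN : N ∈ W)
    (p : Submodule A N) (hp : ModuleCat.of A ↥p ∈ W) :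
    ModuleCat.of A (N ⧸ p) ∈ W := by
  have hc := hW.2.2.2.1 (ModuleCat.ofHom p.subtype : ModuleCat.of A ↥p ⟶ N) hp hN
  refine mem_of_equiv hW.2.1 hc (Submodule.quotEquivOfEq _ _ ?_)
  exact Submodule.range_subtype p

lemma sub_gen_mem_of_wide (hW : IsWide K A W) {W₀ : ModuleCat A} (hW₀ : W₀ ∈ W)
    {N : ModuleCat A} (hN : N ∈ W)
    (p : Submodule A N) (hp : ModuleCat.of A ↥p ∈ gen W) :
    ModuleCat.of A ↥p ∈ W := by
  obtain ⟨n, Ms, hMs, f, hf⟩ := hp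
  have hprod := prod_mem_of_wide hW hW₀ n Ms hMs
  have hr := range_mem_of_wide hW
    (ModuleCat.ofHom (p.subtype ∘ₗ f.hom) :
      ModuleCat.of A (∀ i, Ms i) ⟶ N) hprod hN
  have hrange : LinearMap.range (p.subtype ∘ₗ f.hom) = p := by
    rw [LinearMap.range_comp, LinearMap.range_eq_top.mpr hf, Submodule.map_top,
      Submodule.range_subtype]
  exact mem_of_equiv hW.2.1 hr (LinearEquiv.ofEq _ _ hrange)

end Aux

theorem wide_closed_under_submodules_in_TW (K : Type) [Field K] [IsAlgClosed K] (A : Type) [Ring A] [Algebra K A]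
    [FiniteDimensional K A]
    (W : Set (ModuleCat A)) (hW : IsWide K A W)
    (W₀ : ModuleCat A) (hW₀ : W₀ ∈ W) (X : Submodule A W₀)
    (hX : ModuleCat.of A ↥X ∈ filt (gen W)) :
    ModuleCat.of A ↥X ∈ W := by
  obtain ⟨n, F, hmono, h0, htop, hsub⟩ := hX
  have key : ∀ i : Fin (n + 1), ModuleCat.of A ↥(F i) ∈ W := by
    intro i
    induction i using Fin.induction with
    | zero =>
      haveI : Subsingleton ↥(F 0) := by rw [h0]; infer_instance
      exact zero_mem_of_wide hW hW₀
    | succ i ih =>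
      set FC := F i.castSucc with hFC
      set FS := F i.succ with hFS
      set G : Submodule A W₀ := Submodule.map X.subtype FC with hG
      have hGmem : ModuleCat.of A ↥G ∈ W :=
        mem_of_equiv hW.2.1 ih
          (Submodule.equivMapOfInjective X.subtype X.injective_subtype FC)
      have hQuot : ModuleCat.of A (W₀ ⧸ G) ∈ W := quot_mem_of_wide hW hW₀ G hGmem
      set φ : ↥FS →ₗ[A] W₀ ⧸ G := G.mkQ ∘ₗ (X.subtype ∘ₗ FS.subtype) with hφ
      have hker : LinearMap.ker φ = Submodule.comap FS.subtype FC := by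
        rw [hφ, LinearMap.ker_comp, Submodule.ker_mkQ, hG, Submodule.comap_comp,
          Submodule.comap_map_eq_of_injective X.injective_subtype]
      have hQgen : ModuleCat.of A ↥(LinearMap.range φ) ∈ gen W := by
        refine gen_mem_of_equiv (hsub i)
          ((Submodule.quotEquivOfEq _ _ hker.symm).trans φ.quotKerEquivRange)
      have hQW : ModuleCat.of A ↥(LinearMap.range φ) ∈ W :=
        sub_gen_mem_of_wide hW hW₀ hQuot (LinearMap.range φ) hQgen
      have hle : FC ≤ FS := hmono (Fin.castSucc_le_succ i)
      have hexact : Function.Exact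
          (ModuleCat.ofHom (Submodule.inclusion hle) :
            ModuleCat.of A ↥FC ⟶ ModuleCat.of A ↥FS)
          (ModuleCat.ofHom φ.rangeRestrict :
            ModuleCat.of A ↥FS ⟶ ModuleCat.of A ↥(LinearMap.range φ)) := by
        rw [LinearMap.exact_iff]
        show LinearMap.ker φ.rangeRestrict = LinearMap.range (Submodule.inclusion hle)
        rw [LinearMap.ker_rangeRestrict, hker, Submodule.range_inclusion]
      exact hW.2.2.2.2 _ _ (Submodule.inclusion_injective hle)
        φ.surjective_rangeRestrict hexact ih hQW
  have hlast := key (Fin.last n)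
  rw [htop] at hlast
  exact mem_of_equiv hW.2.1 hlast Submodule.topEquiv
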